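/- Let G be an additive abelian group and S a zero-sum free subset of G with |S| = 6 such that every element of S has order at least 3. Then for every g ∈ S, the number of nonempty subsets T of S with σ(T) = g is at most 4. -/

import Mathlib

open Finset

def sigmaSet {G : Type*} [AddCommGroup G] [DecidableEq G] (S : Finset G) : Finset G :=
  (S.powerset.filter (· ≠ ∅)).image (fun T => T.sum id)

def ZeroSumFree {G : Type*} [AddCommGroup G] (S : Finset G) : Prop :=
  ∀ T ⊆ S, T ≠ ∅ → T.sum id ≠ 0

namespace ZsfAux

def singN (t : ℕ) : Prop := t &&& (t-1) = 0

def bad2N (a b : ℕ) : Prop :=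
  a ||| b = b ∨ a ||| b = a ∨
  (a ^^^ (a &&& b) ≠ 0 ∧ singN (a ^^^ (a &&& b)) ∧ b ^^^ (b &&& a) ≠ 0 ∧ singN (b ^^^ (b &&& a)))

def quadN (a b c d : ℕ) : Prop :=
  a ^^^ b = c ^^^ d ∧ (a &&& b) ^^^ (c &&& d) ≠ 0 ∧ singN ((a &&& b) ^^^ (c &&& d)) ∧
    ((a &&& b) ^^^ (c &&& d)) &&& (c ||| d) = 0

def quad6 (a b c d : ℕ) : Prop :=
  quadN a b c d ∨ quadN c d a b ∨ quadN a c b d ∨ quadN b d a c ∨ quadN a d b c ∨ quadN b c a d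

instance (t) : Decidable (singN t) := by unfold singN; infer_instance
instance (a b) : Decidable (bad2N a b) := by unfold bad2N; infer_instance
instance (a b c d) : Decidable (quadN a b c d) := by unfold quadN; infer_instance
instance (a b c d) : Decidable (quad6 a b c d) := by unfold quad6; infer_instance

set_option maxHeartbeats 12000000 in
set_option synthInstance.maxSize 4000 in
set_option synthInstance.maxHeartbeats 1000000 in
lemma natComb : ∀ a < 32, ∀ b < 32, a = b ∨
    (singN a ∨ singN b ∨ bad2N a b ∨ ∀ c < 32,
      (c = a ∨ c = b ∨ singN c ∨ bad2N a c ∨ bad2N b c ∨ ∀ d < 32,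
        (d = a ∨ d = b ∨ d = c ∨ singN d ∨ bad2N a d ∨ bad2N b d ∨ bad2N c d ∨
          quad6 a b c d))) := by decide

def enc (m : Finset (Fin 5)) : ℕ := ∑ i ∈ m, 2 ^ (i : ℕ)

lemma encInj : ∀ m m' : Finset (Fin 5), enc m = enc m' → m = m' := by decide +kernel

lemma encLt : ∀ m : Finset (Fin 5), enc m < 32 := by decide +kernel

lemma encLor : ∀ m m' : Finset (Fin 5), enc m ||| enc m' = enc (m ∪ m') := by decide +kernel

lemma encLand : ∀ m m' : Finset (Fin 5), enc m &&& enc m' = enc (m ∩ m') := by decide +kernel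

lemma encXor : ∀ m m' : Finset (Fin 5), enc m ^^^ enc m' = enc (symmDiff m m') := by decide +kernel

lemma encDiff : ∀ m m' : Finset (Fin 5), enc m ^^^ (enc m &&& enc m') = enc (m \ m') := by decide +kernel

lemma encSing : ∀ m : Finset (Fin 5), m ≠ ∅ → singN (enc m) → ∃ i, m = {i} := by decide +kernel

lemma encEmpty : enc ∅ = 0 := by decide +kernel

section Cases
set_option maxHeartbeats 1000000

variable {G : Type*} [AddCommGroup G]

lemma singCase (f : Fin 5 → G) (g : G) (hfg : ∀ i, f i ≠ g)
    (A : Finset (Fin 5)) (hA : ∑ i ∈ A, f i = g) (hne : A.Nonempty)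
    (h : singN (enc A)) : False := by
  obtain ⟨x, rfl⟩ := encSing A hne.ne_empty h
  rw [Finset.sum_singleton] at hA
  exact hfg x hA

lemma pairCase (f : Fin 5 → G) (g : G) (hinj : Function.Injective f)
    (hzs : ∀ m : Finset (Fin 5), m.Nonempty → ∑ i ∈ m, f i ≠ 0)
    (A B : Finset (Fin 5)) (hA : ∑ i ∈ A, f i = g) (hB : ∑ i ∈ B, f i = g)
    (hAB : A ≠ B) (h : bad2N (enc A) (enc B)) : False := by
  have sub : ∀ X Y : Finset (Fin 5), X ⊆ Y → X ≠ Y →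
      (∑ i ∈ X, f i = g) → (∑ i ∈ Y, f i = g) → False := by
    intro X Y hXY hne hX hY
    have hs := Finset.sum_sdiff (f := f) hXY
    rw [hX, hY] at hs
    have h1 : ∑ i ∈ Y \ X, f i + g = 0 + g := by rw [zero_add]; exact hs
    have h0 : ∑ i ∈ Y \ X, f i = 0 := add_right_cancel h1
    have hne' : (Y \ X).Nonempty :=
      Finset.sdiff_nonempty.mpr (fun hYX => hne (Finset.Subset.antisymm hXY hYX))
    exact hzs _ hne' h0
  rcases h with h | h | ⟨h1, h2, h3, h4⟩
  · rw [encLor] at h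
    exact sub A B (Finset.union_eq_right.mp (encInj _ _ h)) hAB hA hB
  · rw [encLor] at h
    exact sub B A (Finset.union_eq_left.mp (encInj _ _ h)) (Ne.symm hAB) hB hA
  · rw [encDiff A B] at h1 h2
    rw [encDiff B A] at h3 h4
    obtain ⟨x, hx⟩ := encSing (A \ B) (fun h0 => h1 (by rw [h0, encEmpty])) h2
    obtain ⟨y, hy⟩ := encSing (B \ A) (fun h0 => h3 (by rw [h0, encEmpty])) h4
    have e1 : ∑ i ∈ A ∩ B, f i + f x = g := by
      have := Finset.sum_inter_add_sum_sdiff A B f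
      rwa [hx, Finset.sum_singleton, hA] at this
    have e2 : ∑ i ∈ A ∩ B, f i + f y = g := by
      have := Finset.sum_inter_add_sum_sdiff B A f
      rwa [hy, Finset.sum_singleton, hB, Finset.inter_comm B A] at this
    have hxy : x = y := hinj (add_left_cancel (e1.trans e2.symm))
    have hxA : x ∈ A \ B := by rw [hx]; exact Finset.mem_singleton_self x
    have hyB : y ∈ B \ A := by rw [hy]; exact Finset.mem_singleton_self y
    rw [← hxy] at hyB
    exact (Finset.mem_sdiff.mp hxA).2 (Finset.mem_sdiff.mp hyB).1

lemma quadCase (f : Fin 5 → G) (g : G) (hord2 : ∀ i, f i + f i ≠ 0)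
    (A B C D : Finset (Fin 5))
    (hA : ∑ i ∈ A, f i = g) (hB : ∑ i ∈ B, f i = g)
    (hC : ∑ i ∈ C, f i = g) (hD : ∑ i ∈ D, f i = g)
    (h : quadN (enc A) (enc B) (enc C) (enc D)) : False := by
  obtain ⟨h1, h2, h3, h4⟩ := h
  rw [encXor A B, encXor C D] at h1
  have hΔ : symmDiff A B = symmDiff C D := encInj _ _ h1
  rw [encLand A B, encLand C D, encXor (A ∩ B) (C ∩ D)] at h2 h3 h4
  obtain ⟨x, hx⟩ := encSing _ (fun h0 => h2 (by rw [h0, encEmpty])) h3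
  rw [hx, encLor C D, encLand {x} (C ∪ D)] at h4
  have h5 : ({x} : Finset (Fin 5)) ∩ (C ∪ D) = ∅ := encInj _ _ (h4.trans encEmpty.symm)
  have hxCD : x ∉ C ∪ D := by
    intro hmem
    have : x ∈ ({x} : Finset (Fin 5)) ∩ (C ∪ D) :=
      Finset.mem_inter.mpr ⟨Finset.mem_singleton_self x, hmem⟩
    rw [h5] at this
    exact absurd this (Finset.notMem_empty x)
  have hxI : x ∉ C ∩ D := fun hm => hxCD (Finset.mem_union_left _ (Finset.mem_inter.mp hm).1)
  have hxAB : x ∈ A ∩ B := by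
    have hxs : x ∈ symmDiff (A ∩ B) (C ∩ D) := by rw [hx]; exact Finset.mem_singleton_self x
    rcases Finset.mem_symmDiff.mp hxs with ⟨h, _⟩ | ⟨h, _⟩
    · exact h
    · exact absurd h hxI
  have hIins : A ∩ B = insert x (C ∩ D) := by
    ext y
    by_cases hyx : y = x
    · subst hyx
      simp only [Finset.mem_insert, true_or, iff_true]
      exact hxAB
    · have hy1 : y ∉ symmDiff (A ∩ B) (C ∩ D) := by rw [hx]; simp [hyx]
      rw [Finset.mem_symmDiff] at hy1
      simp only [Finset.mem_insert, hyx, false_or]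
      constructor
      · intro h; by_contra hnc; exact hy1 (Or.inl ⟨h, hnc⟩)
      · intro h; by_contra hnc; exact hy1 (Or.inr ⟨h, hnc⟩)
  have hUins : A ∪ B = insert x (C ∪ D) := by
    ext y
    by_cases hyx : y = x
    · subst hyx
      simp only [Finset.mem_insert, true_or, iff_true]
      exact Finset.mem_union_left _ (Finset.mem_inter.mp hxAB).1
    · simp only [Finset.mem_insert, hyx, false_or, Finset.mem_union]
      have e1 : (y ∈ A ∧ y ∉ B ∨ y ∈ B ∧ y ∉ A) ↔ (y ∈ C ∧ y ∉ D ∨ y ∈ D ∧ y ∉ C) := by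
        rw [← Finset.mem_symmDiff, ← Finset.mem_symmDiff, hΔ]
      have e2 : (y ∈ A ∧ y ∈ B) ↔ (y ∈ C ∧ y ∈ D) := by
        rw [← Finset.mem_inter, ← Finset.mem_inter, hIins]
        simp [Finset.mem_insert, hyx]
      tauto
  have k1 := Finset.sum_union_inter (s₁ := A) (s₂ := B) (f := f)
  have k2 := Finset.sum_union_inter (s₁ := C) (s₂ := D) (f := f)
  rw [hUins, hIins, Finset.sum_insert hxCD, Finset.sum_insert hxI, hA, hB] at k1
  rw [hC, hD] at k2
  apply hord2 x
  have key : f x + f x =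
      ((f x + ∑ i ∈ C ∪ D, f i) + (f x + ∑ i ∈ C ∩ D, f i)) -
        (∑ i ∈ C ∪ D, f i + ∑ i ∈ C ∩ D, f i) := by abel
  rw [k1, k2, sub_self] at key
  exact key

end Cases

end ZsfAux

set_option maxHeartbeats 1000000 in
open ZsfAux in
theorem stmt11 {G : Type*} [AddCommGroup G] [DecidableEq G] (S : Finset G)
    (hS : ZeroSumFree S) (hcard : S.card = 6)
    (hord : ∀ g ∈ S, g ≠ 0 ∧ g + g ≠ 0) :
    ∀ g ∈ S, (S.powerset.filter (fun T => T ≠ ∅ ∧ T.sum id = g)).card ≤ 4 := by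
  intro g hg
  by_contra hcon
  push_neg at hcon
  have hgmem : ({g} : Finset G) ∈ S.powerset.filter (fun T => T ≠ ∅ ∧ T.sum id = g) := by
    rw [Finset.mem_filter, Finset.mem_powerset]
    refine ⟨Finset.singleton_subset_iff.mpr hg, Finset.singleton_ne_empty g, ?_⟩
    simp
  have step1 : ∀ T ∈ S.powerset.filter (fun T => T ≠ ∅ ∧ T.sum id = g), g ∈ T → T = {g} := by
    intro T hT hgT
    rw [Finset.mem_filter, Finset.mem_powerset] at hT
    obtain ⟨hTS, hTne, hTsum⟩ := hT
    by_cases h0 : T.erase g = ∅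
    · have hsub : T ⊆ {g} := by
        intro x hx
        rw [Finset.mem_singleton]
        by_contra hxg
        have hxe : x ∈ T.erase g := Finset.mem_erase.mpr ⟨hxg, hx⟩
        rw [h0] at hxe
        exact absurd hxe (Finset.notMem_empty x)
      rcases Finset.subset_singleton_iff.mp hsub with h | h
      · exact absurd h hTne
      · exact h
    · exfalso
      apply hS (T.erase g) ((Finset.erase_subset g T).trans hTS) h0
      have h1 : id g + ∑ x ∈ T.erase g, id x = T.sum id := Finset.add_sum_erase T id hgT
      rw [hTsum] at h1
      have h2 : g + (T.erase g).sum id = g + 0 := by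
        rw [add_zero]
        exact h1
      exact add_left_cancel h2
  set F' := (S.powerset.filter (fun T => T ≠ ∅ ∧ T.sum id = g)).erase {g} with hF'
  have hcard4 : 4 ≤ F'.card := by
    rw [hF', Finset.card_erase_of_mem hgmem]
    simp only [Finset.nonempty_iff_ne_empty] at hcon
    omega
  obtain ⟨T1, hT1⟩ := Finset.card_pos.mp (show 0 < F'.card by omega)
  have e1 : (F'.erase T1).card = F'.card - 1 := Finset.card_erase_of_mem hT1
  obtain ⟨T2, hT2⟩ := Finset.card_pos.mp (show 0 < (F'.erase T1).card by omega)
  have e2 : ((F'.erase T1).erase T2).card = (F'.erase T1).card - 1 :=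
    Finset.card_erase_of_mem hT2
  obtain ⟨T3, hT3⟩ := Finset.card_pos.mp (show 0 < ((F'.erase T1).erase T2).card by omega)
  obtain ⟨T4, hT4⟩ := Finset.card_pos.mp (show 0 < (((F'.erase T1).erase T2).erase T3).card by
    rw [Finset.card_erase_of_mem hT3]; omega)
  have hT2F : T2 ∈ F' := Finset.mem_of_mem_erase hT2
  have h21 : T2 ≠ T1 := (Finset.mem_erase.mp hT2).1
  have hT3e : T3 ∈ F'.erase T1 := Finset.mem_of_mem_erase hT3
  have h32 : T3 ≠ T2 := (Finset.mem_erase.mp hT3).1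
  have hT3F : T3 ∈ F' := Finset.mem_of_mem_erase hT3e
  have h31 : T3 ≠ T1 := (Finset.mem_erase.mp hT3e).1
  have hT4e2 : T4 ∈ (F'.erase T1).erase T2 := Finset.mem_of_mem_erase hT4
  have h43 : T4 ≠ T3 := (Finset.mem_erase.mp hT4).1
  have hT4e1 : T4 ∈ F'.erase T1 := Finset.mem_of_mem_erase hT4e2
  have h42 : T4 ≠ T2 := (Finset.mem_erase.mp hT4e2).1
  have hT4F : T4 ∈ F' := Finset.mem_of_mem_erase hT4e1
  have h41 : T4 ≠ T1 := (Finset.mem_erase.mp hT4e1).1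
  have unpack : ∀ T, T ∈ F' → T ⊆ S.erase g ∧ T ≠ ∅ ∧ T.sum id = g := by
    intro T hT
    have hne := (Finset.mem_erase.mp hT).1
    have hTF := Finset.mem_of_mem_erase hT
    have hg' : g ∉ T := fun hgT => hne (step1 T hTF hgT)
    rw [Finset.mem_filter, Finset.mem_powerset] at hTF
    obtain ⟨h1, h2, h3⟩ := hTF
    exact ⟨Finset.subset_erase.mpr ⟨h1, hg'⟩, h2, h3⟩
  obtain ⟨hT1S, hT1ne, hT1sum⟩ := unpack T1 hT1
  obtain ⟨hT2S, hT2ne, hT2sum⟩ := unpack T2 hT2F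
  obtain ⟨hT3S, hT3ne, hT3sum⟩ := unpack T3 hT3F
  obtain ⟨hT4S, hT4ne, hT4sum⟩ := unpack T4 hT4F
  -- bridge to Fin 5
  have hS'card : (S.erase g).card = 5 := by rw [Finset.card_erase_of_mem hg, hcard]
  let e := Finset.equivFinOfCardEq hS'card
  set f : Fin 5 → G := fun i => ((e.symm i : (S.erase g : Finset G)) : G) with hfdef
  have hfmem : ∀ i, f i ∈ S.erase g := fun i => (e.symm i).2
  have hfS : ∀ i, f i ∈ S := fun i => Finset.mem_of_mem_erase (hfmem i)
  have hfg : ∀ i, f i ≠ g := fun i => Finset.ne_of_mem_erase (hfmem i)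
  have hford : ∀ i, f i + f i ≠ 0 := fun i => (hord _ (hfS i)).2
  have hinj : Function.Injective f := fun i j h => e.symm.injective (Subtype.ext h)
  have hsurj : ∀ x ∈ S.erase g, ∃ i, f i = x := fun x hx => ⟨e ⟨x, hx⟩, by simp [hfdef]⟩
  have hzs : ∀ m : Finset (Fin 5), m.Nonempty → ∑ i ∈ m, f i ≠ 0 := by
    intro m hm h0
    have hsub : m.image f ⊆ S := by
      intro x hx
      obtain ⟨i, _, rfl⟩ := Finset.mem_image.mp hx
      exact hfS i
    have hnee : m.image f ≠ ∅ := (hm.image f).ne_empty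
    have hsum : (m.image f).sum id = 0 := by
      show ∑ x ∈ m.image f, id x = 0
      rw [Finset.sum_image (fun x _ y _ h => hinj h)]
      simpa using h0
    exact hS _ hsub hnee hsum
  set mk : Finset G → Finset (Fin 5) := fun T => Finset.univ.filter (fun i => f i ∈ T) with hmk
  have himg : ∀ T, T ⊆ S.erase g → (mk T).image f = T := by
    intro T hT
    ext x
    simp only [hmk, Finset.mem_image, Finset.mem_filter, Finset.mem_univ, true_and]
    constructor
    · rintro ⟨i, hi, rfl⟩; exact hi
    · intro hx
      obtain ⟨i, rfl⟩ := hsurj x (hT hx)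
      exact ⟨i, hx, rfl⟩
  have hsumT : ∀ T, T ⊆ S.erase g → ∑ i ∈ mk T, f i = T.sum id := by
    intro T hT
    have : (∑ x ∈ (mk T).image f, id x) = ∑ i ∈ mk T, id (f i) :=
      Finset.sum_image (fun x _ y _ h => hinj h)
    rw [himg T hT] at this
    simpa using this.symm
  have hmkinj : ∀ T T', T ⊆ S.erase g → T' ⊆ S.erase g → mk T = mk T' → T = T' := by
    intro T T' h1 h2 h12
    rw [← himg T h1, ← himg T' h2, h12]
  have hmne : ∀ T, T ⊆ S.erase g → T ≠ ∅ → (mk T).Nonempty := by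
    intro T h1 h2
    rw [Finset.nonempty_iff_ne_empty]
    intro h0
    apply h2
    have := himg T h1
    rw [h0] at this
    simpa using this.symm
  have hs1 : ∑ i ∈ mk T1, f i = g := (hsumT T1 hT1S).trans hT1sum
  have hs2 : ∑ i ∈ mk T2, f i = g := (hsumT T2 hT2S).trans hT2sum
  have hs3 : ∑ i ∈ mk T3, f i = g := (hsumT T3 hT3S).trans hT3sum
  have hs4 : ∑ i ∈ mk T4, f i = g := (hsumT T4 hT4S).trans hT4sum
  have hm1ne : (mk T1).Nonempty := hmne T1 hT1S hT1ne
  have hm2ne : (mk T2).Nonempty := hmne T2 hT2S hT2ne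
  have hm3ne : (mk T3).Nonempty := hmne T3 hT3S hT3ne
  have hm4ne : (mk T4).Nonempty := hmne T4 hT4S hT4ne
  have hm12 : mk T1 ≠ mk T2 := fun h => h21 (hmkinj T2 T1 hT2S hT1S h.symm)
  have hm13 : mk T1 ≠ mk T3 := fun h => h31 (hmkinj T3 T1 hT3S hT1S h.symm)
  have hm14 : mk T1 ≠ mk T4 := fun h => h41 (hmkinj T4 T1 hT4S hT1S h.symm)
  have hm23 : mk T2 ≠ mk T3 := fun h => h32 (hmkinj T3 T2 hT3S hT2S h.symm)
  have hm24 : mk T2 ≠ mk T4 := fun h => h42 (hmkinj T4 T2 hT4S hT2S h.symm)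
  have hm34 : mk T3 ≠ mk T4 := fun h => h43 (hmkinj T4 T3 hT4S hT3S h.symm)
  rcases natComb (enc (mk T1)) (encLt _) (enc (mk T2)) (encLt _) with h | h
  · exact hm12 (encInj _ _ h)
  rcases h with h | h | h | hinner
  · exact singCase f g hfg (mk T1) hs1 hm1ne h
  · exact singCase f g hfg (mk T2) hs2 hm2ne h
  · exact pairCase f g hinj hzs (mk T1) (mk T2) hs1 hs2 hm12 h
  rcases hinner (enc (mk T3)) (encLt _) with h | h | h | h | h | hinner2
  · exact hm13 (encInj _ _ h).symm
  · exact hm23 (encInj _ _ h).symm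
  · exact singCase f g hfg (mk T3) hs3 hm3ne h
  · exact pairCase f g hinj hzs (mk T1) (mk T3) hs1 hs3 hm13 h
  · exact pairCase f g hinj hzs (mk T2) (mk T3) hs2 hs3 hm23 h
  rcases hinner2 (enc (mk T4)) (encLt _) with h | h | h | h | h | h | h | hq
  · exact hm14 (encInj _ _ h).symm
  · exact hm24 (encInj _ _ h).symm
  · exact hm34 (encInj _ _ h).symm
  · exact singCase f g hfg (mk T4) hs4 hm4ne h
  · exact pairCase f g hinj hzs (mk T1) (mk T4) hs1 hs4 hm14 h
  · exact pairCase f g hinj hzs (mk T2) (mk T4) hs2 hs4 hm24 h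
  · exact pairCase f g hinj hzs (mk T3) (mk T4) hs3 hs4 hm34 h
  rcases hq with h | h | h | h | h | h
  · exact quadCase f g hford (mk T1) (mk T2) (mk T3) (mk T4) hs1 hs2 hs3 hs4 h
  · exact quadCase f g hford (mk T3) (mk T4) (mk T1) (mk T2) hs3 hs4 hs1 hs2 h
  · exact quadCase f g hford (mk T1) (mk T3) (mk T2) (mk T4) hs1 hs3 hs2 hs4 h
  · exact quadCase f g hford (mk T2) (mk T4) (mk T1) (mk T3) hs2 hs4 hs1 hs3 h
  · exact quadCase f g hford (mk T1) (mk T4) (mk T2) (mk T3) hs1 hs4 hs2 hs3 h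
  · exact quadCase f g hford (mk T2) (mk T3) (mk T1) (mk T4) hs2 hs3 hs1 hs4 h
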